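/- Let M' be a matroid on a finite ground set N' with rank function rk', let w : N' → ℕ with 1 ≤ w(e) ≤ W for all e ∈ N', and let M₂ be the unfolded matroid on N = {(e,i) : e ∈ N', 1 ≤ i ≤ w(e)} whose independent sets are the I ⊆ N such that for every i ∈ {1,…,W} the set {e : (e, w(e)-i+1) ∈ I} is independent in M'. Then for every subset S ⊆ N, the rank of S in M₂ equals ∑_{i=1}^{W} rk'({e ∈ N' : (e, w(e)-i+1) ∈ S}). -/

import Mathlib

open Finset

/-- A matroid on a finite ground set, given by its family of independent sets. -/
structure FinMatroid (α : Type*) [DecidableEq α] [Fintype α] where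
  Indep : Finset α → Prop
  indep_empty : Indep ∅
  indep_subset : ∀ ⦃A B : Finset α⦄, A ⊆ B → Indep B → Indep A
  indep_exchange : ∀ ⦃A B : Finset α⦄, Indep A → Indep B → B.card < A.card →
    ∃ x ∈ A \ B, Indep (insert x B)

/-- The rank of a set `S` in a matroid: the size of a largest independent subset of `S`. -/
noncomputable def FinMatroid.rank {α : Type*} [DecidableEq α] [Fintype α]
    (M : FinMatroid α) (S : Finset α) : ℕ :=
  sSup {n : ℕ | ∃ I ⊆ S, M.Indep I ∧ I.card = n}

/-- The rank of `S` with respect to an arbitrary independence predicate. -/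
noncomputable def frank {β : Type*} (Ind : Finset β → Prop) (S : Finset β) : ℕ :=
  sSup {n : ℕ | ∃ I ⊆ S, Ind I ∧ I.card = n}

variable {α : Type*} [DecidableEq α] [Fintype α]

/-- The unfolded ground set `N = {(e,i) : e ∈ N', 1 ≤ i ≤ w e}`. -/
def unfoldGround (w : α → ℕ) : Finset (α × ℕ) :=
  Finset.univ.biUnion fun e => (Finset.Icc 1 (w e)).image fun i => (e, i)

/-- The `i`-th layer projection `{e ∈ N' : (e,i) ∈ I}`. -/
def proj1 (I : Finset (α × ℕ)) (i : ℕ) : Finset α :=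
  Finset.univ.filter fun e => (e, i) ∈ I

/-- The `i`-th reverse-layer projection `{e ∈ N' : (e, w e - i + 1) ∈ I}`. -/
def proj2 (w : α → ℕ) (I : Finset (α × ℕ)) (i : ℕ) : Finset α :=
  Finset.univ.filter fun e => i ≤ w e ∧ (e, w e - i + 1) ∈ I

/-- Independence in the unfolded matroid `M₁`. -/
def UnfoldIndep1 (M' : FinMatroid α) (w : α → ℕ) (W : ℕ) (I : Finset (α × ℕ)) : Prop :=
  I ⊆ unfoldGround w ∧ ∀ i ∈ Finset.Icc 1 W, M'.Indep (proj1 I i)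

/-- Independence in the unfolded matroid `M₂`. -/
def UnfoldIndep2 (M' : FinMatroid α) (w : α → ℕ) (W : ℕ) (I : Finset (α × ℕ)) : Prop :=
  I ⊆ unfoldGround w ∧ ∀ i ∈ Finset.Icc 1 W, M'.Indep (proj2 w I i)

/-- The unfolding `{(e,i) : e ∈ S', 1 ≤ i ≤ w e}` of a set `S' ⊆ N'`. -/
def unfoldSet (w : α → ℕ) (S' : Finset α) : Finset (α × ℕ) :=
  S'.biUnion fun e => (Finset.Icc 1 (w e)).image fun i => (e, i)

lemma le_frank {β : Type*} {Ind : Finset β → Prop} {S I : Finset β}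
    (hIS : I ⊆ S) (hI : Ind I) : I.card ≤ frank Ind S := by
  apply le_csSup
  · exact ⟨S.card, fun n hn => by
      obtain ⟨I', hI', _, rfl⟩ := hn; exact Finset.card_le_card hI'⟩
  · exact ⟨I, hIS, hI, rfl⟩

lemma frank_spec {β : Type*} {Ind : Finset β → Prop} (h0 : Ind ∅) (S : Finset β) :
    ∃ I ⊆ S, Ind I ∧ I.card = frank Ind S := by
  have h := Nat.sSup_mem (s := {n : ℕ | ∃ I ⊆ S, Ind I ∧ I.card = n})
    ⟨0, ∅, Finset.empty_subset S, h0, rfl⟩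
    ⟨S.card, fun n hn => by obtain ⟨I', hI', _, rfl⟩ := hn; exact Finset.card_le_card hI'⟩
  exact h

lemma mem_unfoldGround {w : α → ℕ} {p : α × ℕ} (hp : p ∈ unfoldGround w) :
    1 ≤ p.2 ∧ p.2 ≤ w p.1 := by
  simp only [unfoldGround, Finset.mem_biUnion, Finset.mem_image, Finset.mem_univ,
    Finset.mem_Icc, true_and] at hp
  obtain ⟨e, j, hj, rfl⟩ := hp
  exact hj

lemma card_proj2_sum (w : α → ℕ) (W : ℕ) (hw : ∀ e : α, 1 ≤ w e ∧ w e ≤ W)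
    (I : Finset (α × ℕ)) (hI : I ⊆ unfoldGround w) :
    I.card = ∑ i ∈ Finset.Icc 1 W, (proj2 w I i).card := by
  have hmem : ∀ p ∈ I, 1 ≤ p.2 ∧ p.2 ≤ w p.1 := fun p hp => mem_unfoldGround (hI hp)
  rw [Finset.card_eq_sum_card_fiberwise (f := fun p : α × ℕ => w p.1 - p.2 + 1)
    (t := Finset.Icc 1 W) (fun p hp => by
      have h1 := hmem p hp
      have h2 := hw p.1
      simp only [Finset.mem_coe, Finset.mem_Icc]; omega)]
  apply Finset.sum_congr rfl
  intro i hi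
  simp only [Finset.mem_Icc] at hi
  apply Finset.card_bij (fun (p : α × ℕ) _ => p.1)
  · intro p hp
    simp only [Finset.mem_filter] at hp
    obtain ⟨hpI, hpi⟩ := hp
    obtain ⟨e, j⟩ := p
    have hb := hmem _ hpI
    simp only at hb hpi ⊢
    simp only [proj2, Finset.mem_filter, Finset.mem_univ, true_and]
    have h2 : i ≤ w e := by omega
    have h1 : w e - i + 1 = j := by omega
    exact ⟨h2, by rw [h1]; exact hpI⟩
  · rintro ⟨e, j⟩ hp ⟨e', j'⟩ hp' h
    simp only [Finset.mem_filter] at hp hp'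
    have hb := hmem _ hp.1
    have hb' := hmem _ hp'.1
    simp only at h ⊢
    subst h
    have : j = j' := by
      have := hp.2; have := hp'.2
      simp only at hb hb' this ⊢
      omega
    rw [this]
  · intro e he
    simp only [proj2, Finset.mem_filter, Finset.mem_univ, true_and] at he
    refine ⟨(e, w e - i + 1), ?_, rfl⟩
    simp only [Finset.mem_filter]
    exact ⟨he.2, by have := he.1; omega⟩

lemma proj2_mono {w : α → ℕ} {I S : Finset (α × ℕ)} (h : I ⊆ S) (i : ℕ) :
    proj2 w I i ⊆ proj2 w S i := by
  intro e he
  simp only [proj2, Finset.mem_filter, Finset.mem_univ, true_and] at he ⊢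
  exact ⟨he.1, h he.2⟩

/-- the rank of `S ⊆ N` in the unfolded matroid `M₂` equals the
sum over the layers `i ∈ {1,…,W}` of the `M'`-rank of the set
`{e ∈ N' : (e, w e - i + 1) ∈ S}`. -/
theorem unfolded_rank_two (M' : FinMatroid α) (w : α → ℕ) (W : ℕ)
    (hw : ∀ e : α, 1 ≤ w e ∧ w e ≤ W)
    (S : Finset (α × ℕ)) (hS : S ⊆ unfoldGround w) :
    frank (UnfoldIndep2 M' w W) S = ∑ i ∈ Finset.Icc 1 W, M'.rank (proj2 w S i) := by
  have hrank : ∀ A : Finset α, M'.rank A = frank M'.Indep A := fun _ => rfl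
  have hind0 : UnfoldIndep2 M' w W ∅ := by
    refine ⟨Finset.empty_subset _, fun i _ => ?_⟩
    have : proj2 w (∅ : Finset (α × ℕ)) i = ∅ := by
      simp [proj2]
    rw [this]; exact M'.indep_empty
  apply le_antisymm
  · -- upper bound
    obtain ⟨I₀, hI₀S, hI₀ind, hI₀card⟩ := frank_spec hind0 S
    rw [← hI₀card, card_proj2_sum w W hw I₀ hI₀ind.1]
    apply Finset.sum_le_sum
    intro i hi
    rw [hrank]
    exact le_frank (proj2_mono hI₀S i) (hI₀ind.2 i hi)
  · -- lower bound: build a big independent set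
    have hspec : ∀ i : ℕ, ∃ J ⊆ proj2 w S i, M'.Indep J ∧ J.card = M'.rank (proj2 w S i) := by
      intro i
      rw [hrank]
      exact frank_spec M'.indep_empty _
    choose J hJsub hJind hJcard using hspec
    set I : Finset (α × ℕ) :=
      (Finset.Icc 1 W).biUnion (fun i => (J i).image (fun e => (e, w e - i + 1))) with hIdef
    have hJle : ∀ i e, e ∈ J i → i ≤ w e ∧ (e, w e - i + 1) ∈ S := by
      intro i e he
      have := hJsub i he
      simp only [proj2, Finset.mem_filter, Finset.mem_univ, true_and] at this
      exact this
    have hIS : I ⊆ S := by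
      intro p hp
      simp only [hIdef, Finset.mem_biUnion, Finset.mem_image, Finset.mem_Icc] at hp
      obtain ⟨i, hi, e, he, rfl⟩ := hp
      exact (hJle i e he).2
    have hproj : ∀ i ∈ Finset.Icc 1 W, proj2 w I i = J i := by
      intro i hi
      simp only [Finset.mem_Icc] at hi
      ext e
      simp only [proj2, Finset.mem_filter, Finset.mem_univ, true_and, hIdef,
        Finset.mem_biUnion, Finset.mem_image, Finset.mem_Icc]
      constructor
      · rintro ⟨hie, i', hi', e', he', heq⟩
        injection heq with h1 h2
        subst h1
        have hle := (hJle i' _ he').1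
        have hii : i' = i := by omega
        subst hii
        exact he'
      · intro he
        exact ⟨(hJle i e he).1, i, hi, e, he, rfl⟩
    have hInd : UnfoldIndep2 M' w W I := by
      refine ⟨fun p hp => hS (hIS hp), fun i hi => ?_⟩
      rw [hproj i hi]
      exact hJind i
    have hcard : I.card = ∑ i ∈ Finset.Icc 1 W, M'.rank (proj2 w S i) := by
      rw [card_proj2_sum w W hw I hInd.1]
      apply Finset.sum_congr rfl
      intro i hi
      rw [hproj i hi, hJcard i]
    rw [← hcard]
    exact le_frank hIS hInd
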